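/- Let A, B be maximal monotone operators on a real Hilbert space X, let λ > 0, and let (y_n, a_n, x_n, b_n) be sequences generated by the Douglas–Rachford method from initial points x₀, b₀ ∈ X. If there exists z ∈ X with 0 ∈ A(z) + B(z), then ‖y_n − y_{n−1}‖ → 0 and ‖a_n − a_{n−1}‖ → 0 as n → ∞. -/

import Mathlib

open Filter Topology

/-- A set-valued operator `T` on `X` (identified with its graph) is monotone. -/
def IsMonotoneOp {X : Type*} [NormedAddCommGroup X] [InnerProductSpace ℝ X]
    (T : Set (X × X)) : Prop :=
  ∀ p ∈ T, ∀ q ∈ T, (0 : ℝ) ≤ inner ℝ (p.1 - q.1) (p.2 - q.2)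

/-- `T` is maximal monotone: monotone and maximal w.r.t. inclusion among monotone operators. -/
def IsMaxMonotone {X : Type*} [NormedAddCommGroup X] [InnerProductSpace ℝ X]
    (T : Set (X × X)) : Prop :=
  IsMonotoneOp T ∧ ∀ S : Set (X × X), IsMonotoneOp S → T ⊆ S → S = T

/-- Weak convergence of a sequence in an inner product space. -/
def WeakConv {X : Type*} [NormedAddCommGroup X] [InnerProductSpace ℝ X]
    (u : ℕ → X) (l : X) : Prop :=
  ∀ v : X, Tendsto (fun n => (inner ℝ (u n) v : ℝ)) atTop (𝓝 (inner ℝ l v))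

/-- The extended solution set `S_e(A,B) = {(z,w) : w ∈ B(z), -w ∈ A(z)}`. -/
def Se {X : Type*} [NormedAddCommGroup X] [InnerProductSpace ℝ X]
    (A B : Set (X × X)) : Set (X × X) :=
  {p | (p.1, p.2) ∈ B ∧ (p.1, -p.2) ∈ A}

/-- The sequences `(y n, a n, x n, b n)` (for `n ≥ 1`) are generated by the
Douglas–Rachford method with stepsize `lam` from initial points `x 0`, `b 0`:
`a n ∈ A (y n)`, `lam • a n + y n = x (n-1) - lam • b (n-1)`,
`b n ∈ B (x n)`, `lam • b n + x n = y n + lam • b (n-1)`. -/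
def IsDR {X : Type*} [NormedAddCommGroup X] [InnerProductSpace ℝ X]
    (A B : Set (X × X)) (lam : ℝ) (y a x b : ℕ → X) : Prop :=
  ∀ n, 1 ≤ n →
    (y n, a n) ∈ A ∧ lam • a n + y n = x (n - 1) - lam • b (n - 1) ∧
    (x n, b n) ∈ B ∧ lam • b n + x n = y n + lam • b (n - 1)

lemma dr_key_ineq {X : Type*} [NormedAddCommGroup X] [InnerProductSpace ℝ X]
    (P Q q α : X) (lam : ℝ)
    (h1 : (0:ℝ) ≤ inner ℝ (P + lam•Q - lam•q) α) (h2 : (0:ℝ) ≤ (inner ℝ P Q : ℝ))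
    (hlam : 0 ≤ lam) :
    ‖P‖^2 + lam^2*‖Q‖^2 + lam^2*‖α+q‖^2 ≤ ‖P + lam•(α+Q)‖^2 + lam^2*‖q‖^2 := by
  have key : ‖P + lam•(α+Q)‖^2 + lam^2*‖q‖^2
      = ‖P‖^2 + lam^2*‖Q‖^2 + lam^2*‖α+q‖^2
        + 2*lam*(inner ℝ (P + lam•Q - lam•q) α : ℝ) + 2*lam*(inner ℝ P Q : ℝ) := by
    simp only [← real_inner_self_eq_norm_sq, inner_add_left, inner_add_right,
      inner_sub_left, inner_sub_right, real_inner_smul_left, real_inner_smul_right,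
      real_inner_comm Q P, real_inner_comm q P, real_inner_comm α P,
      real_inner_comm q Q, real_inner_comm α Q, real_inner_comm α q]
    ring
  nlinarith [mul_nonneg (mul_nonneg (by norm_num : (0:ℝ) ≤ 2) hlam) h1,
    mul_nonneg (mul_nonneg (by norm_num : (0:ℝ) ≤ 2) hlam) h2]

lemma dr_step3 {X : Type*} [NormedAddCommGroup X] [InnerProductSpace ℝ X]
    (yd ad xd bd t : X) (lam : ℝ) (hlam : 0 < lam)
    (hmA : (0:ℝ) ≤ inner ℝ yd ad) (hmB : (0:ℝ) ≤ inner ℝ xd bd)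
    (heq : lam•ad + yd = xd - lam•bd)
    (hs : xd + lam•bd = t) :
    ‖yd‖ ≤ ‖t‖ ∧ lam * ‖ad‖ ≤ 2 * ‖t‖ := by
  subst hs
  have hyd : yd = (xd - lam•bd) - lam•ad := by rw [← heq]; abel
  have e1 : (inner ℝ yd (xd - lam•bd) : ℝ) - lam * inner ℝ yd ad = inner ℝ yd yd := by
    rw [← real_inner_smul_right, ← inner_sub_right, ← hyd]
  have e2 : ‖yd‖^2 ≤ ‖yd‖ * ‖xd - lam•bd‖ := by
    have h3 := real_inner_le_norm yd (xd - lam•bd)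
    have h4 : (0:ℝ) ≤ lam * inner ℝ yd ad := mul_nonneg hlam.le hmA
    have h5 := real_inner_self_eq_norm_sq yd
    linarith
  have e3 : ‖xd + lam•bd‖^2 = ‖xd - lam•bd‖^2 + 4*(lam * inner ℝ xd bd) := by
    simp only [← real_inner_self_eq_norm_sq, inner_add_left, inner_add_right,
      inner_sub_left, inner_sub_right, real_inner_smul_left, real_inner_smul_right,
      real_inner_comm bd xd]
    ring
  have e4 : ‖xd - lam•bd‖ ≤ ‖xd + lam•bd‖ := by
    nlinarith [norm_nonneg (xd - lam•bd), norm_nonneg (xd + lam•bd),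
      mul_nonneg hlam.le hmB]
  have e5 : ‖yd‖ ≤ ‖xd - lam•bd‖ := by
    nlinarith [norm_nonneg yd, norm_nonneg (xd - lam•bd)]
  refine ⟨e5.trans e4, ?_⟩
  have had : lam•ad = (xd - lam•bd) - yd := by rw [← heq]; abel
  have h6 : ‖lam•ad‖ ≤ ‖xd - lam•bd‖ + ‖yd‖ := by rw [had]; exact norm_sub_le _ _
  rw [norm_smul, Real.norm_of_nonneg hlam.le] at h6
  linarith

/-- If the monotone inclusion `0 ∈ A(z) + B(z)` has a solution, then in the
Douglas–Rachford method `‖y_n - y_{n-1}‖ → 0` and `‖a_n - a_{n-1}‖ → 0`. -/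
theorem dr_item4 {X : Type*} [NormedAddCommGroup X] [InnerProductSpace ℝ X]
    [CompleteSpace X] (A B : Set (X × X))
    (hA : IsMaxMonotone A) (hB : IsMaxMonotone B)
    (lam : ℝ) (hlam : 0 < lam) (y a x b : ℕ → X) (hDR : IsDR A B lam y a x b)
    (hsol : ∃ z u v : X, (z, u) ∈ A ∧ (z, v) ∈ B ∧ u + v = 0) :
    Tendsto (fun n => ‖y n - y (n - 1)‖) atTop (𝓝 0) ∧
    Tendsto (fun n => ‖a n - a (n - 1)‖) atTop (𝓝 0) := by
  obtain ⟨z, u, v, hzu, hzv, huv⟩ := hsol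
  have hu : u = -v := eq_neg_of_add_eq_zero_left huv
  rw [hu] at hzu
  have hA' := hA.1
  have hB' := hB.1
  set φ : ℕ → ℝ := fun n => ‖x n - z‖^2 + lam^2 * ‖b n - v‖^2 with hφdef
  -- Step 1: Fejér-type inequality
  have step1 : ∀ n : ℕ, φ (n+1) + lam^2 * ‖a (n+1) + b n‖^2 ≤ φ n := by
    intro n
    obtain ⟨hA1, he1, hB1, he2⟩ := hDR (n+1) (by omega)
    simp only [Nat.add_sub_cancel] at he1 he2
    have h2' : y (n+1) = lam • b (n+1) + x (n+1) - lam • b n :=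
      eq_sub_iff_add_eq.mpr he2.symm
    have hxn : x n = x (n+1) + lam • a (n+1) + lam • b (n+1) := by
      have h1' : x n = lam • a (n+1) + y (n+1) + lam • b n := by rw [he1]; abel
      rw [h1', h2']; abel
    have hm1 : (0:ℝ) ≤ inner ℝ (y (n+1) - z) (a (n+1) - -v) := hA' _ hA1 _ hzu
    have hm2 : (0:ℝ) ≤ inner ℝ (x (n+1) - z) (b (n+1) - v) := hB' _ hB1 _ hzv
    have hy : y (n+1) - z = (x (n+1) - z) + lam • (b (n+1) - v) - lam • (b n - v) := by
      rw [h2', smul_sub, smul_sub]; abel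
    have hxz : x n - z = (x (n+1) - z) + lam • ((a (n+1) + v) + (b (n+1) - v)) := by
      rw [hxn, smul_add, smul_add, smul_sub]; abel
    have hab : a (n+1) + b n = (a (n+1) + v) + (b n - v) := by abel
    have := dr_key_ineq (x (n+1) - z) (b (n+1) - v) (b n - v) (a (n+1) + v) lam
      (by rw [← hy]; simpa [sub_neg_eq_add] using hm1) hm2 hlam.le
    simp only [hφdef]
    rw [hxz, hab]
    linarith
  -- Step 2: φ converges, so increments vanish
  have hanti : Antitone φ := antitone_nat_of_succ_le fun n =>
    (le_add_of_nonneg_right (by positivity)).trans (step1 n)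
  have hbdd : BddBelow (Set.range φ) := by
    refine ⟨0, ?_⟩
    rintro r ⟨n, rfl⟩
    simp only [hφdef]
    positivity
  have hconv := tendsto_atTop_ciInf hanti hbdd
  have hdiff : Tendsto (fun n => φ n - φ (n+1)) atTop (𝓝 0) := by
    have h2 := hconv.comp (tendsto_add_atTop_nat 1)
    simpa using hconv.sub h2
  have hsq : Tendsto (fun n => lam^2 * ‖a (n+1) + b n‖^2) atTop (𝓝 0) :=
    squeeze_zero (fun n => by positivity) (fun n => by linarith [step1 n]) hdiff
  have hg : Tendsto (fun n => ‖a (n+1) + b n‖) atTop (𝓝 0) := by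
    have h2 : Tendsto (fun n => Real.sqrt (lam^2 * ‖a (n+1) + b n‖^2) / lam) atTop
        (𝓝 (Real.sqrt 0 / lam)) := ((Real.continuous_sqrt.tendsto 0).comp hsq).div_const lam
    rw [Real.sqrt_zero, zero_div] at h2
    refine h2.congr fun n => ?_
    rw [show lam^2 * ‖a (n+1) + b n‖^2 = (lam * ‖a (n+1) + b n‖)^2 by ring,
      Real.sqrt_sq (by positivity), mul_comm, mul_div_assoc, div_self hlam.ne', mul_one]
  -- Step 3: bounds on consecutive differences
  have bound : ∀ n : ℕ, 3 ≤ n →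
      ‖y n - y (n-1)‖ ≤ lam * ‖a (n-1) + b (n-2)‖ ∧
      ‖a n - a (n-1)‖ ≤ 2 * ‖a (n-1) + b (n-2)‖ := by
    intro n hn
    obtain ⟨hAn, he1, _, _⟩ := hDR n (by omega)
    obtain ⟨hAn', he1', hBn', he2'⟩ := hDR (n-1) (by omega)
    obtain ⟨_, _, hBn'', _⟩ := hDR (n-2) (by omega)
    have hidx : n - 1 - 1 = n - 2 := by omega
    rw [hidx] at he1' he2'
    have heq : lam•(a n - a (n-1)) + (y n - y (n-1))
        = (x (n-1) - x (n-2)) - lam•(b (n-1) - b (n-2)) := by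
      calc lam•(a n - a (n-1)) + (y n - y (n-1))
          = (lam•a n + y n) - (lam•a (n-1) + y (n-1)) := by rw [smul_sub]; abel
        _ = (x (n-1) - lam•b (n-1)) - (x (n-2) - lam•b (n-2)) := by rw [he1, he1']
        _ = (x (n-1) - x (n-2)) - lam•(b (n-1) - b (n-2)) := by rw [smul_sub]; abel
    have hy' : y (n-1) = x (n-2) - lam•b (n-2) - lam•a (n-1) := by rw [← he1']; abel
    have hs : (x (n-1) - x (n-2)) + lam•(b (n-1) - b (n-2))
        = -(lam•(a (n-1) + b (n-2))) := by
      calc (x (n-1) - x (n-2)) + lam•(b (n-1) - b (n-2))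
          = (lam•b (n-1) + x (n-1)) - x (n-2) - lam•b (n-2) := by rw [smul_sub]; abel
        _ = (y (n-1) + lam•b (n-2)) - x (n-2) - lam•b (n-2) := by rw [he2']
        _ = y (n-1) - x (n-2) := by abel
        _ = -(lam•(a (n-1) + b (n-2))) := by rw [hy', smul_add]; abel
    have hmA : (0:ℝ) ≤ inner ℝ (y n - y (n-1)) (a n - a (n-1)) := hA' _ hAn _ hAn'
    have hmB : (0:ℝ) ≤ inner ℝ (x (n-1) - x (n-2)) (b (n-1) - b (n-2)) :=
      hB' _ hBn' _ hBn''
    have h := dr_step3 (y n - y (n-1)) (a n - a (n-1)) (x (n-1) - x (n-2))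
      (b (n-1) - b (n-2)) (-(lam•(a (n-1) + b (n-2)))) lam hlam hmA hmB heq hs
    rw [norm_neg, norm_smul, Real.norm_of_nonneg hlam.le] at h
    refine ⟨h.1, ?_⟩
    have := h.2
    have h2 : ‖a n - a (n-1)‖ ≤ 2 * ‖a (n-1) + b (n-2)‖ := by
      rw [← mul_le_mul_iff_right₀ hlam]
      calc lam * ‖a n - a (n-1)‖ ≤ 2 * (lam * ‖a (n-1) + b (n-2)‖) := this
        _ = lam * (2 * ‖a (n-1) + b (n-2)‖) := by ring
    exact h2
  -- Assemble limits
  have hshift : Tendsto (fun n => ‖a (n-1) + b (n-2)‖) atTop (𝓝 0) := by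
    have h := hg.comp (tendsto_sub_atTop_nat 2)
    refine h.congr' ?_
    filter_upwards [eventually_ge_atTop 2] with n hn
    simp only [Function.comp]
    rw [show n - 2 + 1 = n - 1 from by omega]
  constructor
  · refine squeeze_zero' (Eventually.of_forall fun n => norm_nonneg _) ?_
      (by simpa using hshift.const_mul lam)
    filter_upwards [eventually_ge_atTop 3] with n hn
    exact (bound n hn).1
  · refine squeeze_zero' (Eventually.of_forall fun n => norm_nonneg _) ?_
      (by simpa using hshift.const_mul 2)
    filter_upwards [eventually_ge_atTop 3] with n hn
    exact (bound n hn).2
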